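/- The assignment σ ↦ inv(σ) = {(i,j) : 1 ≤ i < j ≤ n and σ⁻¹(i) > σ⁻¹(j)} defines a bijection from the symmetric group on [n] onto the set of all clopen subsets of J_n = {(i,j) : 1 ≤ i < j ≤ n}. -/

import Mathlib

/-- `J_n = {(i,j) : 1 ≤ i < j ≤ n}`. -/
def JnS (n : ℕ) : Set (ℕ × ℕ) := {p | 1 ≤ p.1 ∧ p.1 < p.2 ∧ p.2 ≤ n}

/-- Transitivity of a set of pairs, viewed as a binary relation. -/
def TransSet (x : Set (ℕ × ℕ)) : Prop := ∀ i j k : ℕ, (i, j) ∈ x → (j, k) ∈ x → (i, k) ∈ x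

/-- A subset of `J_n` is closed if it is transitive. -/
def ClosedIn (n : ℕ) (x : Set (ℕ × ℕ)) : Prop := x ⊆ JnS n ∧ TransSet x

/-- A subset of `J_n` is clopen if both it and its complement in `J_n` are closed. -/
def ClopenIn (n : ℕ) (x : Set (ℕ × ℕ)) : Prop := ClosedIn n x ∧ ClosedIn n (JnS n \ x)

/-- The inversion set of a permutation `σ` of `[n] = {1,…,n}`:
`inv σ = {(i,j) ∈ J_n : σ⁻¹ i > σ⁻¹ j}`. -/
def invSet (n : ℕ) (σ : Equiv.Perm (Set.Icc 1 n)) : Set (ℕ × ℕ) :=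
  {p | ∃ (h1 : p.1 ∈ Set.Icc 1 n) (h2 : p.2 ∈ Set.Icc 1 n),
      p.1 < p.2 ∧ (σ.symm ⟨p.2, h2⟩ : ℕ) < (σ.symm ⟨p.1, h1⟩ : ℕ)}

lemma mem_invSet_coe {n : ℕ} (σ : Equiv.Perm (Set.Icc 1 n)) (a b : Set.Icc 1 n)
    (hab : (a : ℕ) < b) :
    ((a : ℕ), (b : ℕ)) ∈ invSet n σ ↔ (σ.symm b : ℕ) < (σ.symm a : ℕ) := by
  constructor
  · rintro ⟨h1, h2, -, hlt⟩; exact hlt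
  · intro hlt; exact ⟨a.2, b.2, hab, hlt⟩

lemma perm_strictMono_eq {n : ℕ} (f : Equiv.Perm (Set.Icc 1 n)) (hf : StrictMono f) :
    ∀ a, f a = a := by
  have key : ∀ m : ℕ, ∀ a : Set.Icc 1 n, (a : ℕ) = m → f a = a := by
    intro m
    induction m using Nat.strong_induction_on with
    | _ m ih =>
      intro a ha
      rcases lt_trichotomy (f a) a with h | h | h
      · have h2 : f (f a) = f a := ih (f a) (by rw [← ha]; exact_mod_cast h) (f a) rfl
        exact f.injective h2
      · exact h
      · have hb : f.symm a < a := by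
          by_contra hle
          push_neg at hle
          have := hf.monotone hle
          rw [Equiv.apply_symm_apply] at this
          exact absurd (lt_of_lt_of_le h this) (lt_irrefl _)
        have := ih (f.symm a) (by rw [← ha]; exact_mod_cast hb) (f.symm a) rfl
        rw [Equiv.apply_symm_apply] at this
        rw [← this] at hb
        exact absurd hb (lt_irrefl _)
  exact fun a => key _ a rfl

/-- The order relation on `[n]` induced by a clopen set. -/
def rx (n : ℕ) (x : Set (ℕ × ℕ)) (a b : Set.Icc 1 n) : Prop :=
  ((a : ℕ) < b ∧ ((a : ℕ), (b : ℕ)) ∉ x) ∨ ((b : ℕ) < a ∧ ((b : ℕ), (a : ℕ)) ∈ x)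

lemma rx_trans {n : ℕ} {x : Set (ℕ × ℕ)} (hx : ClopenIn n x) :
    ∀ a b c, rx n x a b → rx n x b c → rx n x a c := by
  intro a b c hab hbc
  obtain ⟨ha1, ha2⟩ := Set.mem_Icc.mp a.2
  obtain ⟨hb1, hb2⟩ := Set.mem_Icc.mp b.2
  obtain ⟨hc1, hc2⟩ := Set.mem_Icc.mp c.2
  rcases hab with ⟨hij, hnx⟩ | ⟨hji, hmem⟩ <;> rcases hbc with ⟨hjk, hnx2⟩ | ⟨hkj, hmem2⟩
  · have := hx.2.2 a b c ⟨⟨ha1, hij, hb2⟩, hnx⟩ ⟨⟨hb1, hjk, hc2⟩, hnx2⟩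
    exact Or.inl ⟨hij.trans hjk, this.2⟩
  · rcases lt_trichotomy (a : ℕ) (c : ℕ) with h | h | h
    · exact Or.inl ⟨h, fun h2 => hnx (hx.1.2 _ _ _ h2 hmem2)⟩
    · exfalso; rw [← h] at hmem2; exact hnx hmem2
    · refine Or.inr ⟨h, ?_⟩
      by_contra hni
      have := hx.2.2 c a b ⟨⟨hc1, h, ha2⟩, hni⟩ ⟨⟨ha1, hij, hb2⟩, hnx⟩
      exact this.2 hmem2
  · rcases lt_trichotomy (a : ℕ) (c : ℕ) with h | h | h
    · exact Or.inl ⟨h, fun h2 => hnx2 (hx.1.2 _ _ _ hmem h2)⟩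
    · exfalso; rw [h] at hmem; exact hnx2 hmem
    · refine Or.inr ⟨h, ?_⟩
      by_contra hni
      have := hx.2.2 b c a ⟨⟨hb1, hjk, hc2⟩, hnx2⟩ ⟨⟨hc1, h, ha2⟩, hni⟩
      exact this.2 hmem
  · exact Or.inr ⟨hkj.trans hji, hx.1.2 _ _ _ hmem2 hmem⟩

/-- Type synonym for `Set.Icc 1 n` to carry the order induced by a clopen set. -/
def Syn (n : ℕ) : Type := Set.Icc 1 n

lemma card_Icc_one (n : ℕ) : Fintype.card (Set.Icc 1 n) = n := by
  simp [Nat.card_Icc]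

/-- The assignment `σ ↦ inv σ` is a bijection from the symmetric group on `[n]`
onto the set of all clopen subsets of `J_n`. -/
theorem stmt0 (n : ℕ) (hn : 0 < n) :
    Set.BijOn (invSet n) Set.univ {x | ClopenIn n x} := by
  classical
  refine ⟨?_, ?_, ?_⟩
  · -- maps to clopen sets
    intro σ _
    refine ⟨⟨?_, ?_⟩, ?_, ?_⟩
    · rintro ⟨i, j⟩ ⟨h1, h2, hij, -⟩
      exact ⟨(Set.mem_Icc.mp h1).1, hij, (Set.mem_Icc.mp h2).2⟩
    · rintro i j k ⟨h1, h2, hlt1, ha⟩ ⟨h2', h3, hlt2, hb⟩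
      exact ⟨h1, h3, hlt1.trans hlt2, hb.trans ha⟩
    · exact fun p hp => hp.1
    · rintro i j k ⟨hJ1, hn1⟩ ⟨hJ2, hn2⟩
      obtain ⟨hi1, hij, hjn⟩ := hJ1
      obtain ⟨hj1, hjk, hkn⟩ := hJ2
      refine ⟨⟨hi1, hij.trans hjk, hkn⟩, ?_⟩
      rintro ⟨h1, h2, -, hlt⟩
      have hj : j ∈ Set.Icc 1 n := Set.mem_Icc.mpr ⟨hj1, hjn⟩
      have le1 : (σ.symm ⟨i, h1⟩ : ℕ) ≤ (σ.symm ⟨j, hj⟩ : ℕ) := by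
        by_contra hle
        push_neg at hle
        exact hn1 ⟨h1, hj, hij, hle⟩
      have le2 : (σ.symm ⟨j, hj⟩ : ℕ) ≤ (σ.symm ⟨k, h2⟩ : ℕ) := by
        by_contra hle
        push_neg at hle
        exact hn2 ⟨hj, h2, hjk, hle⟩
      exact absurd hlt (not_lt.mpr (le1.trans le2))
  · -- injectivity
    intro σ _ τ _ h
    have key : ∀ a b : Set.Icc 1 n, (a : ℕ) < b →
        ((σ.symm b : ℕ) < (σ.symm a : ℕ) ↔ (τ.symm b : ℕ) < (τ.symm a : ℕ)) := by
      intro a b hab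
      rw [← mem_invSet_coe σ a b hab, h, mem_invSet_coe τ a b hab]
    set g : Equiv.Perm (Set.Icc 1 n) := σ.trans τ.symm with hg
    have hgm : StrictMono g := by
      intro a b hab
      have hab' : (a : ℕ) < b := Subtype.coe_lt_coe.mpr hab
      have hne : σ a ≠ σ b := fun h2 => absurd (σ.injective h2) hab.ne
      rcases lt_trichotomy (σ a : ℕ) (σ b : ℕ) with hij | hij | hij
      · have h1 : ¬ ((σ.symm (σ b) : ℕ) < (σ.symm (σ a) : ℕ)) := by
          rw [Equiv.symm_apply_apply, Equiv.symm_apply_apply]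
          exact not_lt.mpr hab'.le
        have h2 := (key (σ a) (σ b) hij).not.mp h1
        push_neg at h2
        have h3 : (τ.symm (σ a) : ℕ) ≠ (τ.symm (σ b) : ℕ) := fun he =>
          hne (τ.symm.injective (Subtype.coe_injective he))
        exact Subtype.coe_lt_coe.mp (lt_of_le_of_ne h2 h3)
      · exact absurd (Subtype.coe_injective hij) hne
      · have h1 : (σ.symm (σ a) : ℕ) < (σ.symm (σ b) : ℕ) := by
          rw [Equiv.symm_apply_apply, Equiv.symm_apply_apply]; exact hab'
        exact Subtype.coe_lt_coe.mp ((key (σ b) (σ a) hij).mp h1)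
    have := perm_strictMono_eq g hgm
    refine Equiv.ext fun a => ?_
    have h2 := this a
    simp only [hg, Equiv.trans_apply] at h2
    calc σ a = τ (τ.symm (σ a)) := (τ.apply_symm_apply _).symm
    _ = τ a := by rw [h2]
  · -- surjectivity
    intro x hx
    simp only [Set.mem_setOf_eq] at hx
    haveI hT : IsTrans (Set.Icc 1 n) (rx n x) := ⟨rx_trans hx⟩
    haveI : IsIrrefl (Set.Icc 1 n) (rx n x) :=
      ⟨fun a h => by rcases h with ⟨h, -⟩ | ⟨h, -⟩ <;> exact lt_irrefl _ h⟩
    haveI : IsTrichotomous (Set.Icc 1 n) (rx n x) := by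
      have tri : ∀ a b : Set.Icc 1 n, rx n x a b ∨ a = b ∨ rx n x b a := by
        intro a b
        rcases lt_trichotomy (a : ℕ) (b : ℕ) with h | h | h
        · by_cases hm : ((a : ℕ), (b : ℕ)) ∈ x
          · exact Or.inr (Or.inr (Or.inr ⟨h, hm⟩))
          · exact Or.inl (Or.inl ⟨h, hm⟩)
        · exact Or.inr (Or.inl (Subtype.coe_injective h))
        · by_cases hm : ((b : ℕ), (a : ℕ)) ∈ x
          · exact Or.inl (Or.inr ⟨h, hm⟩)
          · exact Or.inr (Or.inr (Or.inl ⟨h, hm⟩))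
      constructor
      intro a b h1 h2
      rcases tri a b with h | h | h
      exacts [absurd h h1, h, absurd h h2]
    haveI hSO : IsStrictOrder (Set.Icc 1 n) (rx n x) := ⟨⟩
    haveI hSTO : IsStrictTotalOrder (Set.Icc 1 n) (rx n x) := ⟨⟩
    letI L : LinearOrder (Syn n) :=
      @linearOrderOfSTO (Set.Icc 1 n) (rx n x) hSTO (fun a b => Classical.dec _)
    letI : Fintype (Syn n) := (inferInstance : Fintype (Set.Icc 1 n))
    have hcard : Fintype.card (Syn n) = n := card_Icc_one n
    let e1 : Fin n ≃o Syn n := Fintype.orderIsoFinOfCardEq (Syn n) hcard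
    let e2 : Fin n ≃o Set.Icc 1 n := Fintype.orderIsoFinOfCardEq (Set.Icc 1 n) (card_Icc_one n)
    let σ : Equiv.Perm (Set.Icc 1 n) := e2.toEquiv.symm.trans e1.toEquiv
    have hkey : ∀ c d : Set.Icc 1 n, ((σ.symm c : ℕ) < (σ.symm d : ℕ)) ↔ rx n x c d := by
      intro c d
      have h1 : σ.symm c < σ.symm d ↔ rx n x c d := by
        show e2 (e1.symm (show Syn n from c)) < e2 (e1.symm (show Syn n from d)) ↔ _
        rw [e2.lt_iff_lt, e1.symm.lt_iff_lt]
        exact ⟨fun h => h, fun h => h⟩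
      exact (Subtype.coe_lt_coe).trans h1
    refine ⟨σ, Set.mem_univ σ, ?_⟩
    ext ⟨i, j⟩
    constructor
    · rintro ⟨h1, h2, hij, hlt⟩
      have := (hkey ⟨j, h2⟩ ⟨i, h1⟩).mp hlt
      rcases this with ⟨h, -⟩ | ⟨-, hm⟩
      · exact absurd (h.trans hij) (lt_irrefl _)
      · exact hm
    · intro hmem
      obtain ⟨hi1, hij, hjn⟩ := hx.1.1 hmem
      have h1 : i ∈ Set.Icc 1 n := Set.mem_Icc.mpr ⟨hi1, (hij.trans_le hjn).le⟩
      have h2 : j ∈ Set.Icc 1 n := Set.mem_Icc.mpr ⟨hi1.trans hij.le, hjn⟩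
      exact ⟨h1, h2, hij, (hkey ⟨j, h2⟩ ⟨i, h1⟩).mpr (Or.inr ⟨hij, hmem⟩)⟩
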